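/- arXiv:1910.08546 — 4 statements merged into one kernel-verified Lean document; each statement's English description precedes it below -/
import Mathlib

section
/- Let γ be a k-uniform morphism on a finite alphabet A with k ≥ 2, whose iterative fixed point beginning with a₀ exists and is not ultimately periodic. Then there exist (not necessarily distinct) letters b, c ∈ A and a power γ^m of γ such that γ^m(bc) contains bc as a factor, with γ^m(b) = w₁ b c w₂ where w₁ and w₂ are nonempty words. -/
/-- Extension of a substitution `φ : A → B*` to finite words. -/
def wordMap {A B : Type} (φ : A → List B) (w : List A) : List B := w.flatMap φ

/-- `n`-fold iteration of a morphism applied to a word. -/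
def iterWord {A : Type} (φ : A → List A) (n : ℕ) (w : List A) : List A :=
  (wordMap φ)^[n] w

/-- A morphism is `k`-uniform if every letter has image of length `k`. -/
def Uniform {A : Type} (k : ℕ) (φ : A → List A) : Prop := ∀ a, (φ a).length = k

/-- The finite word `w` is a prefix of the infinite sequence `s`. -/
def PrefixSeq {A : Type} (w : List A) (s : ℕ → A) : Prop :=
  ∀ i, i < w.length → w[i]? = some (s i)

/-- `φ` is prolongable on `a₀`: `φ(a₀) = a₀ x` with `x` nonempty and iterates of `x` never empty. -/
def Prolongable {A : Type} (φ : A → List A) (a₀ : A) : Prop :=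
  ∃ x : List A, x ≠ [] ∧ φ a₀ = a₀ :: x ∧ ∀ ℓ, iterWord φ ℓ x ≠ []

/-- `s` is the iterative fixed point of `φ` beginning with `a₀`:
`φ` is prolongable on `a₀` and every iterate `φ^n(a₀)` is a prefix of `s`
(their lengths tend to infinity thanks to prolongability, so `s` is determined). -/
def IsIterFix {A : Type} (φ : A → List A) (a₀ : A) (s : ℕ → A) : Prop :=
  Prolongable φ a₀ ∧ ∀ n, PrefixSeq (iterWord φ n [a₀]) s

/-- `s` is ultimately periodic. -/
def UltimatelyPeriodic {A : Type} (s : ℕ → A) : Prop :=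
  ∃ N p : ℕ, 1 ≤ p ∧ ∀ n, N ≤ n → s (n + p) = s n

/-- The extension of `φ` to infinite sequences fixes `s`: for every `m`,
the image of the length-`m` prefix of `s` is again a prefix of `s`. -/
def SeqFixedPoint {A : Type} (φ : A → List A) (s : ℕ → A) : Prop :=
  ∀ m, PrefixSeq (wordMap φ ((List.range m).map s)) s

/- ------------------- auxiliary lemmas ------------------- -/

theorem wordMap_append' {A : Type} (φ : A → List A) (u v : List A) :
    wordMap φ (u ++ v) = wordMap φ u ++ wordMap φ v :=
  List.flatMap_append

theorem iterWord_append' {A : Type} (φ : A → List A) (n : ℕ) (u v : List A) :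
    iterWord φ n (u ++ v) = iterWord φ n u ++ iterWord φ n v := by
  induction n generalizing u v with
  | zero => rfl
  | succ n ih =>
    simp only [iterWord, Function.iterate_succ_apply] at *
    rw [wordMap_append', ih]

theorem iterWord_nil' {A : Type} (φ : A → List A) (m : ℕ) : iterWord φ m [] = [] := by
  induction m with
  | zero => rfl
  | succ m ih =>
    simp only [iterWord, Function.iterate_succ_apply] at *
    have : wordMap φ [] = [] := rfl
    rw [this, ih]

theorem iterWord_add' {A : Type} (φ : A → List A) (n m : ℕ) (w : List A) :
    iterWord φ (n + m) w = iterWord φ m (iterWord φ n w) := by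
  simp only [iterWord]
  rw [Nat.add_comm n m, Function.iterate_add_apply]

theorem iterWord_flatMap' {A : Type} (φ : A → List A) (m : ℕ) (w : List A) :
    iterWord φ m w = w.flatMap (fun a => iterWord φ m [a]) := by
  induction w with
  | nil => simp [iterWord_nil']
  | cons a w ih =>
    have h : (a :: w) = [a] ++ w := rfl
    rw [h, iterWord_append', ih, List.flatMap_append]
    simp

theorem wordMap_length' {A : Type} {k : ℕ} {φ : A → List A} (hu : Uniform k φ)
    (w : List A) : (wordMap φ w).length = k * w.length := by
  induction w with
  | nil => simp [wordMap]
  | cons a w ih =>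
    have h : wordMap φ (a :: w) = φ a ++ wordMap φ w := List.flatMap_cons
    rw [h, List.length_append, hu a, ih, List.length_cons, Nat.mul_succ]
    omega

theorem iterWord_length' {A : Type} {k : ℕ} {φ : A → List A} (hu : Uniform k φ)
    (n : ℕ) (w : List A) : (iterWord φ n w).length = k ^ n * w.length := by
  induction n with
  | zero => simp [iterWord]
  | succ n ih =>
    have h : iterWord φ (n + 1) w = wordMap φ (iterWord φ n w) := by
      simp only [iterWord, Function.iterate_succ_apply']
    rw [h, wordMap_length' hu, ih, pow_succ]
    ring

theorem flatMap_get?' {A B : Type} (f : A → List B) (L : ℕ) (hf : ∀ a, (f a).length = L) :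
    ∀ (l : List A) (q r : ℕ) (a : A), r < L → l[q]? = some a →
      (l.flatMap f)[q * L + r]? = (f a)[r]? := by
  intro l
  induction l with
  | nil => intro q r a _ h; simp at h
  | cons x l ih =>
    intro q r a hr h
    cases q with
    | zero =>
      have hx : x = a := by simpa using h
      subst hx
      rw [List.flatMap_cons, Nat.zero_mul, Nat.zero_add,
        List.getElem?_append_left (by rw [hf x]; exact hr)]
    | succ q =>
      have hidx : (q + 1) * L + r = L + (q * L + r) := by ring
      rw [List.flatMap_cons, hidx,
        List.getElem?_append_right (by rw [hf x]; omega)]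
      rw [hf x]
      have h2 : L + (q * L + r) - L = q * L + r := by omega
      rw [h2]
      exact ih q r a hr (by simpa using h)

theorem eq_take_append_drop' {A : Type} {l : List A} {i : ℕ} {b c : A}
    (hb : l[i]? = some b) (hc : l[i + 1]? = some c) :
    l = l.take i ++ [b, c] ++ l.drop (i + 2) := by
  have hi1 : i + 1 < l.length := by
    by_contra h
    rw [List.getElem?_eq_none (by omega)] at hc
    simp at hc
  have hi : i < l.length := by omega
  have h1 : l.drop i = l[i] :: l.drop (i + 1) := List.drop_eq_getElem_cons hi
  have h2 : l.drop (i + 1) = l[i + 1] :: l.drop (i + 2) := List.drop_eq_getElem_cons hi1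
  have hb' : l[i] = b := by
    rw [List.getElem?_eq_getElem hi] at hb
    exact Option.some.inj hb
  have hc' : l[i + 1] = c := by
    rw [List.getElem?_eq_getElem hi1] at hc
    exact Option.some.inj hc
  conv_lhs => rw [← List.take_append_drop i l, h1, h2, hb', hc']
  simp

/-- the alternating digit `k-1, 0, k-1, 0, …`. -/
def altDigit (k u : ℕ) : ℕ := if u % 2 = 0 then k - 1 else 0

/-- positions obtained by repeatedly appending alternating digits in base `k`. -/
def chainPos (k : ℕ) : ℕ → ℕ
  | 0 => 0
  | u + 1 => k * chainPos k u + altDigit k u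

/-- the relative offset between level `u` and level `u+m` of the chain. -/
def chainRem (k u : ℕ) : ℕ → ℕ
  | 0 => 0
  | m + 1 => k * chainRem k u m + altDigit k (u + m)

theorem chainPos_add' (k u : ℕ) : ∀ m, chainPos k (u + m) = chainPos k u * k ^ m + chainRem k u m := by
  intro m
  induction m with
  | zero => simp [chainRem]
  | succ m ih =>
    have h : u + (m + 1) = (u + m) + 1 := by omega
    rw [h]
    show k * chainPos k (u + m) + altDigit k (u + m) = _
    rw [ih]
    show _ = chainPos k u * k ^ (m + 1) + (k * chainRem k u m + altDigit k (u + m))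
    ring

theorem altDigit_le (k u : ℕ) : altDigit k u ≤ k - 1 := by
  unfold altDigit; split <;> omega

theorem chainRem_bounds' {k : ℕ} (hk : 2 ≤ k) (u : ℕ) :
    ∀ m, 1 ≤ chainRem k u (m + 3) ∧ chainRem k u (m + 3) + 3 ≤ k ^ (m + 3) := by
  intro m
  induction m with
  | zero =>
    obtain ⟨a, rfl⟩ : ∃ a, k = a + 2 := ⟨k - 2, by omega⟩
    have h3 : chainRem (a + 2) u 3 =
        (a + 2) * ((a + 2) * ((a + 2) * 0 + altDigit (a + 2) u) + altDigit (a + 2) (u + 1))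
          + altDigit (a + 2) (u + 2) := rfl
    rcases Nat.mod_two_eq_zero_or_one u with h | h
    · have h1 : (u + 1) % 2 = 1 := by omega
      have h2 : (u + 2) % 2 = 0 := by omega
      rw [h3]
      simp only [altDigit, h, h1, h2, if_true, if_pos]
      norm_num
      constructor
      · linarith [Nat.zero_le ((a + 2) * ((a + 2) * (a + 1))), Nat.zero_le a]
      · ring_nf
        nlinarith [Nat.zero_le a, sq_nonneg a]
    · have h1 : (u + 1) % 2 = 0 := by omega
      have h2 : (u + 2) % 2 = 1 := by omega
      rw [h3]
      simp only [altDigit, h, h1, h2]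
      norm_num
      constructor
      · nlinarith [Nat.zero_le a]
      · ring_nf
        nlinarith [Nat.zero_le a, sq_nonneg a]
  | succ m ih =>
    obtain ⟨ih1, ih2⟩ := ih
    have hrec : chainRem k u (m + 1 + 3) = k * chainRem k u (m + 3) + altDigit k (u + (m + 3)) := rfl
    set X := k * chainRem k u (m + 3) with hX
    have hXk : k ≤ X := by
      calc k = k * 1 := by omega
      _ ≤ X := Nat.mul_le_mul_left k ih1
    have h2 : X + 3 * k ≤ k ^ (m + 1 + 3) := by
      calc X + 3 * k = k * (chainRem k u (m + 3) + 3) := by rw [hX]; ring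
      _ ≤ k * k ^ (m + 3) := Nat.mul_le_mul_left k ih2
      _ = k ^ (m + 1 + 3) := by rw [show m + 1 + 3 = (m + 3) + 1 from rfl, pow_succ]; ring
    have he : altDigit k (u + (m + 3)) ≤ k - 1 := altDigit_le k _
    rw [hrec]
    omega

theorem stmt0 {A : Type} [Fintype A] (γ : A → List A) (k : ℕ) (hk : 2 ≤ k)
    (hu : Uniform k γ) (a₀ : A) (s : ℕ → A) (hs : IsIterFix γ a₀ s)
    (hnp : ¬ UltimatelyPeriodic s) :
    ∃ (b c : A) (m : ℕ) (w₁ w₂ : List A), 1 ≤ m ∧ w₁ ≠ [] ∧ w₂ ≠ [] ∧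
      iterWord γ m [b] = w₁ ++ [b, c] ++ w₂ ∧
      [b, c] <:+: iterWord γ m [b, c] := by
  classical
  -- pigeonhole on the chain positions, with step at least 3
  obtain ⟨x, y, hxy, hfxy⟩ := Fintype.exists_ne_map_eq_of_card_lt
    (fun v : Fin (Fintype.card A + 1) => s (chainPos k (3 * (v : ℕ))))
    (by simp)
  obtain ⟨v, v', hvv', hfe⟩ : ∃ v v' : ℕ, v < v' ∧
      s (chainPos k (3 * v)) = s (chainPos k (3 * v')) := by
    rcases lt_or_gt_of_ne hxy with h | h
    · exact ⟨x, y, h, hfxy⟩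
    · exact ⟨y, x, h, hfxy.symm⟩
  obtain ⟨m', hm'⟩ : ∃ m', 3 * v' = 3 * v + (m' + 3) := ⟨3 * (v' - v) - 3, by omega⟩
  set u : ℕ := 3 * v with hu'
  set m : ℕ := m' + 3 with hmdef
  set q : ℕ := chainPos k u with hqdef
  set r : ℕ := chainRem k u m with hrdef
  have hq : chainPos k (3 * v') = q * k ^ m + r := by
    rw [hm', chainPos_add']
  obtain ⟨hr1, hr2⟩ := chainRem_bounds' hk u m'
  rw [← hmdef] at hr1 hr2
  -- `b` is the letter at position `q`, which also occurs at position `q·k^m + r`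
  set b : A := s q with hbdef
  have hjb : s (q * k ^ m + r) = b := by rw [← hq]; exact hfe.symm
  set c : A := s (q * k ^ m + r + 1) with hcdef
  -- the prefix of `s` of length `k^q` is `γ^q(a₀)`
  have hqlt : q < k ^ q :=
    lt_of_lt_of_le (Nat.lt_two_pow_self) (Nat.pow_le_pow_left hk q)
  have hlenP : (iterWord γ q [a₀]).length = k ^ q := by
    rw [iterWord_length' hu]; simp
  -- key: the `r'`-th letter of `γ^m(b)` is `s (q·k^m + r')`
  have key : ∀ r', r' < k ^ m →
      (iterWord γ m [b])[r']? = some (s (q * k ^ m + r')) := by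
    intro r' hr'
    have hPM : iterWord γ (q + m) [a₀] =
        (iterWord γ q [a₀]).flatMap (fun a => iterWord γ m [a]) := by
      rw [iterWord_add', iterWord_flatMap']
    have hgetq : (iterWord γ q [a₀])[q]? = some b :=
      hs.2 q q (by rw [hlenP]; exact hqlt)
    have h1 : (iterWord γ (q + m) [a₀])[q * k ^ m + r']? =
        (iterWord γ m [b])[r']? := by
      rw [hPM]
      exact flatMap_get?' _ (k ^ m)
        (fun a => by rw [iterWord_length' hu]; simp) _ q r' b hr' hgetq
    have hlt : q * k ^ m + r' < k ^ (q + m) := by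
      calc q * k ^ m + r' < q * k ^ m + k ^ m := Nat.add_lt_add_left hr' _
        _ = (q + 1) * k ^ m := by ring
        _ ≤ k ^ q * k ^ m := Nat.mul_le_mul hqlt (le_refl _)
        _ = k ^ (q + m) := (pow_add k q m).symm
    have h2 : (iterWord γ (q + m) [a₀])[q * k ^ m + r']? =
        some (s (q * k ^ m + r')) := by
      apply hs.2 (q + m)
      rw [iterWord_length' hu]
      simpa using hlt
    rw [← h1, h2]
  have hgb : (iterWord γ m [b])[r]? = some b := by
    rw [key r (by omega), hjb]
  have hgc : (iterWord γ m [b])[r + 1]? = some c := by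
    have h := key (r + 1) (by omega)
    rw [show q * k ^ m + (r + 1) = q * k ^ m + r + 1 from by omega] at h
    rw [h, hcdef]
  set w : List A := iterWord γ m [b] with hwdef
  have hwlen : w.length = k ^ m := by rw [hwdef, iterWord_length' hu]; simp
  have hdecomp : w = w.take r ++ [b, c] ++ w.drop (r + 2) :=
    eq_take_append_drop' hgb hgc
  refine ⟨b, c, m, w.take r, w.drop (r + 2), by omega, ?_, ?_, hdecomp, ?_⟩
  · intro h
    have := congrArg List.length h
    simp [hwlen] at this
    omega
  · intro h
    have := congrArg List.length h
    simp [hwlen] at this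
    omega
  · have hbc : iterWord γ m [b, c] = w ++ iterWord γ m [c] := by
      rw [show ([b, c] : List A) = [b] ++ [c] from rfl, iterWord_append', hwdef]
    refine ⟨w.take r, w.drop (r + 2) ++ iterWord γ m [c], ?_⟩
    rw [hbc]
    conv_rhs => rw [hdecomp]
    simp [List.append_assoc]
end

section
/- Every k-automatic sequence (k ≥ 2) over a finite alphabet A is non-uniformly morphic; i.e., it is the image under a coding of the iterative fixed point of a non-uniform morphism. -/
section AuxNU

variable {B : Type}

/-- Auxiliary: the 2-block-plus-parity sequence built from `u`. -/
def vSeq (u : ℕ → B) (n : ℕ) : B × B × Bool := (u n, u (n + 1), decide (n % 2 = 1))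

/-- Auxiliary: starting position of the `n`-th block. -/
def pPos (k n : ℕ) : ℕ := k * n + n % 2

/-- Auxiliary: block lengths `k+1` (even positions) and `k-1` (odd positions). -/
def blkLen (k : ℕ) (b : Bool) : ℕ := if b then k - 1 else k + 1

/-- Auxiliary: the restricted sequence over the occurring letters. -/
def sres (u : ℕ → B) (n : ℕ) : {x // x ∈ Set.range (vSeq u)} := ⟨vSeq u n, n, rfl⟩

/-- Auxiliary: the `n`-th block of the new sequence. -/
def Fblk (k : ℕ) (u : ℕ → B) (n : ℕ) : List {x // x ∈ Set.range (vSeq u)} :=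
  (List.range (blkLen k (decide (n % 2 = 1)))).map (fun j => sres u (pPos k n + j))

/-- Auxiliary: the non-uniform morphism. -/
noncomputable def phires (k : ℕ) (u : ℕ → B) (b : {x // x ∈ Set.range (vSeq u)}) :
    List {x // x ∈ Set.range (vSeq u)} :=
  Fblk k u (Exists.choose b.2)

lemma detU {k : ℕ} {u : ℕ → B} (hk : 2 ≤ k)
    (Hc : ∀ n n', u n = u n' → ∀ r, r < k → u (k * n + r) = u (k * n' + r))
    {n n' : ℕ} (h0 : u n = u n') (h1 : u (n + 1) = u (n' + 1)) (h2 : n % 2 = n' % 2)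
    {j : ℕ} (hj : j ≤ blkLen k (decide (n % 2 = 1))) :
    u (pPos k n + j) = u (pPos k n' + j) := by
  have hr2 : n % 2 < 2 := Nat.mod_lt _ (by norm_num)
  by_cases hc : n % 2 + j < k
  · have e1 : pPos k n + j = k * n + (n % 2 + j) := by unfold pPos; omega
    have e2 : pPos k n' + j = k * n' + (n % 2 + j) := by unfold pPos; omega
    rw [e1, e2]; exact Hc n n' h0 _ hc
  · have hub : n % 2 + j < 2 * k := by
      unfold blkLen at hj
      by_cases hp : n % 2 = 1
      · simp [hp] at hj; omega
      · have hp0 : n % 2 = 0 := by omega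
        simp [hp0] at hj; omega
    have ek : k * (n + 1) = k * n + k := by ring
    have ek' : k * (n' + 1) = k * n' + k := by ring
    have e1 : pPos k n + j = k * (n + 1) + (n % 2 + j - k) := by unfold pPos; omega
    have e2 : pPos k n' + j = k * (n' + 1) + (n % 2 + j - k) := by unfold pPos; omega
    rw [e1, e2]; exact Hc (n + 1) (n' + 1) h1 _ (by omega)

lemma Fblk_congr {k : ℕ} {u : ℕ → B} (hk : 2 ≤ k)
    (Hc : ∀ n n', u n = u n' → ∀ r, r < k → u (k * n + r) = u (k * n' + r))
    {n n' : ℕ} (h : vSeq u n = vSeq u n') : Fblk k u n = Fblk k u n' := by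
  have h0 : u n = u n' := congrArg (fun x => x.1) h
  have h1 : u (n + 1) = u (n' + 1) := congrArg (fun x => x.2.1) h
  have hb : decide (n % 2 = 1) = decide (n' % 2 = 1) := congrArg (fun x => x.2.2) h
  have h2 : n % 2 = n' % 2 := by
    rcases Nat.mod_two_eq_zero_or_one n with hp | hp <;>
      rcases Nat.mod_two_eq_zero_or_one n' with hp' | hp' <;>
        simp [hp, hp'] at hb ⊢
  unfold Fblk
  rw [hb]
  apply List.map_congr_left
  intro j hj
  have hj' : j < blkLen k (decide (n' % 2 = 1)) := List.mem_range.mp hj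
  apply Subtype.ext
  have hjle : j ≤ blkLen k (decide (n % 2 = 1)) := by rw [hb]; omega
  have hjle1 : j + 1 ≤ blkLen k (decide (n % 2 = 1)) := by rw [hb]; omega
  have e0 : u (pPos k n + j) = u (pPos k n' + j) := detU hk Hc h0 h1 h2 hjle
  have e1 : u (pPos k n + j + 1) = u (pPos k n' + j + 1) := by
    have := detU hk Hc h0 h1 h2 hjle1
    simpa [← add_assoc] using this
  have ep : (pPos k n + j) % 2 = (pPos k n' + j) % 2 := by
    have hkn : k * n % 2 = k * n' % 2 := by
      rw [Nat.mul_mod, h2, ← Nat.mul_mod]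
    unfold pPos; omega
  show vSeq u (pPos k n + j) = vSeq u (pPos k n' + j)
  unfold vSeq
  rw [e0, e1, ep]

end AuxNU

theorem stmt6 {A : Type} [Fintype A] (k : ℕ) (hk : 2 ≤ k) (a : ℕ → A)
    (h : ∃ (B : Type) (_ : Fintype B) (φ : B → List B) (b₀ : B) (s : ℕ → B) (c : B → A),
      Uniform k φ ∧ IsIterFix φ b₀ s ∧ ∀ n, a n = c (s n)) :
    ∃ (B : Type) (_ : Fintype B) (φ : B → List B) (b₀ : B) (s : ℕ → B) (c : B → A),
      (¬ ∃ m, Uniform m φ) ∧ IsIterFix φ b₀ s ∧ (∀ n, a n = c (s n)) ∧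
      Function.Surjective s := by
  obtain ⟨B₀, _, φ₀, b₀, u, c₀, hunif, ⟨hprol, hpref⟩, hcode⟩ := h
  -- length of wordMap under uniformity
  have hwmlen : ∀ w : List B₀, (wordMap φ₀ w).length = k * w.length := by
    intro w
    induction w with
    | nil => simp [wordMap]
    | cons a t ih =>
      simp only [wordMap, List.flatMap_cons, List.length_append] at *
      rw [ih, hunif a, List.length_cons]; ring
  have hitlen : ∀ n, (iterWord φ₀ n [b₀]).length = k ^ n := by
    intro n
    induction n with
    | zero => simp [iterWord]
    | succ n ih =>
      have : iterWord φ₀ (n + 1) [b₀] = wordMap φ₀ (iterWord φ₀ n [b₀]) := by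
        simp [iterWord, Function.iterate_succ_apply']
      rw [this, hwmlen, ih, pow_succ]; ring
  -- indexing flatMap of a uniform morphism
  have hidx : ∀ (w : List B₀) (q r : ℕ) (b : B₀), r < k → w[q]? = some b →
      (wordMap φ₀ w)[k * q + r]? = (φ₀ b)[r]? := by
    intro w
    induction w with
    | nil => intro q r b _ hq; simp at hq
    | cons a t ih =>
      intro q r b hr hq
      cases q with
      | zero =>
        simp at hq
        subst hq
        have : (wordMap φ₀ (a :: t)) = φ₀ a ++ wordMap φ₀ t := by simp [wordMap]
        rw [this]
        simpa using List.getElem?_append_left (by rw [hunif a]; omega)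
      | succ q =>
        have hstep : (wordMap φ₀ (a :: t)) = φ₀ a ++ wordMap φ₀ t := by simp [wordMap]
        have harith : k * (q + 1) + r = (φ₀ a).length + (k * q + r) := by
          rw [hunif a]; ring
        rw [hstep, harith, List.getElem?_append_right (by omega)]
        simp only [Nat.add_sub_cancel_left]
        exact ih q r b hr (by simpa using hq)
  -- the key self-similarity property of u
  have HL : ∀ q r, r < k → (φ₀ (u q))[r]? = some (u (k * q + r)) := by
    intro q r hr
    have hq : q < k ^ q := Nat.lt_pow_self (n := q) (by omega)
    have hw : (iterWord φ₀ q [b₀])[q]? = some (u q) :=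
      hpref q q (by rw [hitlen]; omega)
    have hsucc : iterWord φ₀ (q + 1) [b₀] = wordMap φ₀ (iterWord φ₀ q [b₀]) := by
      simp [iterWord, Function.iterate_succ_apply']
    have hlt : k * q + r < k ^ (q + 1) := by
      have h1 : k * (q + 1) ≤ k * k ^ q := Nat.mul_le_mul_left k (by omega)
      have h2 : k ^ (q + 1) = k * k ^ q := by rw [pow_succ]; ring
      have : k * q + r < k * (q + 1) := by
        have : k * (q + 1) = k * q + k := by ring
        omega
      omega
    have := hpref (q + 1) (k * q + r) (by rw [hitlen]; exact hlt)
    rw [hsucc] at this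
    rw [← this]
    exact (hidx _ q r (u q) hr hw).symm
  have Hc : ∀ n n', u n = u n' → ∀ r, r < k → u (k * n + r) = u (k * n' + r) := by
    intro n n' hnn r hr
    have h1 := HL n r hr
    have h2 := HL n' r hr
    rw [hnn, h2] at h1
    exact (Option.some.inj h1).symm
  -- images of the new morphism at occurring letters
  have hphi : ∀ n, phires k u (sres u n) = Fblk k u n := by
    intro n
    exact Fblk_congr hk Hc (Exists.choose_spec (sres u n).2)
  have hFlen : ∀ n, (Fblk k u n).length = blkLen k (decide (n % 2 = 1)) := by
    intro n; simp [Fblk]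
  have hblk1 : ∀ b, 1 ≤ blkLen k b := by
    intro b; cases b <;> simp [blkLen] <;> omega
  have hphine : ∀ b, phires k u b ≠ [] := by
    intro b hnil
    have h1 := hFlen (Exists.choose b.2)
    have h2 := hblk1 (decide ((Exists.choose b.2) % 2 = 1))
    rw [show Fblk k u (Exists.choose b.2) = phires k u b from rfl, hnil] at h1
    simp at h1
    omega
  -- the fundamental prefix identity
  have hstepsum : ∀ m, pPos k (m + 1) = pPos k m + blkLen k (decide (m % 2 = 1)) := by
    intro m
    have ek : k * (m + 1) = k * m + k := by ring
    by_cases hp : m % 2 = 1 <;> simp [pPos, blkLen, hp] <;> omega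
  have hmain : ∀ m, wordMap (phires k u) ((List.range m).map (sres u)) =
      (List.range (pPos k m)).map (sres u) := by
    intro m
    induction m with
    | zero => simp [wordMap, pPos]
    | succ m ih =>
      rw [List.range_succ, List.map_append]
      have happ : ∀ w₁ w₂ : List {x // x ∈ Set.range (vSeq u)},
          wordMap (phires k u) (w₁ ++ w₂) =
          wordMap (phires k u) w₁ ++ wordMap (phires k u) w₂ := by
        intro w₁ w₂; simp [wordMap]
      rw [happ, ih]
      have hsingle : wordMap (phires k u) (List.map (sres u) [m]) = Fblk k u m := by
        simp only [List.map_cons, List.map_nil, wordMap, List.flatMap_cons,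
          List.flatMap_nil, List.append_nil]
        exact hphi m
      rw [hsingle, hstepsum m, List.range_add, List.map_append, List.map_map]
      congr 1
  have hiter : ∀ n, ∃ m, 1 ≤ m ∧
      iterWord (phires k u) n [sres u 0] = (List.range m).map (sres u) := by
    intro n
    induction n with
    | zero =>
      refine ⟨1, le_refl _, ?_⟩
      rw [show List.range 1 = [0] from by simp [List.range_succ]]
      simp [iterWord]
    | succ n ih =>
      obtain ⟨m, hm, hw⟩ := ih
      refine ⟨pPos k m, ?_, ?_⟩
      · have : m ≤ k * m := Nat.le_mul_of_pos_left m (by omega)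
        unfold pPos; omega
      · have : iterWord (phires k u) (n + 1) [sres u 0] =
            wordMap (phires k u) (iterWord (phires k u) n [sres u 0]) := by
          simp [iterWord, Function.iterate_succ_apply']
        rw [this, hw, hmain]
  -- description of the first block
  have hsres0 : ∀ j, sres u (pPos k 0 + j) = sres u j := by
    intro j
    have : pPos k 0 + j = j := by simp [pPos]
    rw [this]
  have hF0 : Fblk k u 0 = sres u 0 :: (List.range k).map (fun j => sres u (j + 1)) := by
    have hstep : Fblk k u 0 = (List.range (k + 1)).map (fun j => sres u j) := by
      unfold Fblk
      rw [show blkLen k (decide (0 % 2 = 1)) = k + 1 from by simp [blkLen]]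
      apply List.map_congr_left
      intro j _
      exact hsres0 j
    rw [hstep, List.range_succ_eq_map, List.map_cons, List.map_map]
    rfl
  refine ⟨{x // x ∈ Set.range (vSeq u)}, Fintype.ofFinite _, phires k u, sres u 0, sres u,
      fun b => c₀ b.1.1, ?_, ⟨?_, ?_⟩, ?_, ?_⟩
  · -- non-uniform
    rintro ⟨m, hm⟩
    have h0 := hm (sres u 0)
    have h1 := hm (sres u 1)
    rw [hphi 0] at h0
    rw [hphi 1] at h1
    rw [hFlen 0] at h0
    rw [hFlen 1] at h1
    simp [blkLen] at h0 h1
    omega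
  · -- Prolongable
    refine ⟨(List.range k).map (fun j => sres u (j + 1)), ?_, ?_, ?_⟩
    · simp; omega
    · rw [hphi 0, hF0]
    · intro ℓ
      have hne : ((List.range k).map (fun j => sres u (j + 1))) ≠ [] := by simp; omega
      have key : ∀ (ℓ : ℕ) (w : List {x // x ∈ Set.range (vSeq u)}), w ≠ [] →
          iterWord (phires k u) ℓ w ≠ [] := by
        intro ℓ
        induction ℓ with
        | zero => intro w hw; simpa [iterWord] using hw
        | succ ℓ ih =>
          intro w hw
          have : iterWord (phires k u) (ℓ + 1) w =
              wordMap (phires k u) (iterWord (phires k u) ℓ w) := by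
            simp [iterWord, Function.iterate_succ_apply']
          rw [this]
          have h1 := ih w hw
          obtain ⟨b, t, ht⟩ := List.exists_cons_of_ne_nil h1
          rw [ht]
          simp only [wordMap, List.flatMap_cons]
          intro hcon
          exact hphine b (List.append_eq_nil_iff.mp hcon).1
      exact key ℓ _ hne
  · -- prefix property
    intro n
    obtain ⟨m, hm, hw⟩ := hiter n
    rw [hw]
    intro i hi
    have hi' : i < m := by simpa using hi
    rw [List.getElem?_map, List.getElem?_range hi']
    rfl
  · -- coding
    intro n
    exact hcode n
  · -- surjective
    rintro ⟨x, n, rfl⟩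
    exact ⟨n, rfl⟩
end

section
/- If a sequence (aₙ)_{n≥0} over alphabet A is morphic, and α is a new letter not in A, then the sequence α a₁ a₂ ⋯ (obtained by replacing a₀ with α) is also morphic; moreover if (aₙ) is k-automatic then so is α a₁ a₂ ⋯. -/
/-- A sequence is morphic. -/
def IsMorphic {A : Type} (a : ℕ → A) : Prop :=
  ∃ (B : Type) (_ : Fintype B) (φ : B → List B) (b₀ : B) (s : ℕ → B) (c : B → A),
    IsIterFix φ b₀ s ∧ ∀ n, a n = c (s n)

/-- A sequence is `k`-automatic. -/
def IsKAutomatic {A : Type} (k : ℕ) (a : ℕ → A) : Prop :=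
  ∃ (B : Type) (_ : Fintype B) (φ : B → List B) (b₀ : B) (s : ℕ → B) (c : B → A),
    Uniform k φ ∧ IsIterFix φ b₀ s ∧ ∀ n, a n = c (s n)

/-- Lift of a morphism to `Option B`, with the fresh letter `none` replacing `b₀` at the head. -/
def liftMor {B : Type} (φ : B → List B) (b₀ : B) : Option B → List (Option B)
  | none => none :: (φ b₀).tail.map some
  | some b => (φ b).map some

lemma liftMor_wordMap_some {B : Type} (φ : B → List B) (b₀ : B) (w : List B) :
    wordMap (liftMor φ b₀) (w.map some) = (wordMap φ w).map some := by
  simp [wordMap, List.flatMap_map, List.map_flatMap, liftMor, Function.comp]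

lemma liftMor_iterWord_some {B : Type} (φ : B → List B) (b₀ : B) (n : ℕ) (w : List B) :
    iterWord (liftMor φ b₀) n (w.map some) = (iterWord φ n w).map some := by
  induction n with
  | zero => simp [iterWord]
  | succ n ih =>
    simp only [iterWord, Function.iterate_succ_apply'] at *
    rw [ih, liftMor_wordMap_some]

lemma liftMor_iter {B : Type} (φ : B → List B) (b₀ : B) (x : List B)
    (hx : φ b₀ = b₀ :: x) (n : ℕ) :
    ∃ t : List B, iterWord φ n [b₀] = b₀ :: t ∧
      iterWord (liftMor φ b₀) n [none] = none :: t.map some := by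
  induction n with
  | zero => exact ⟨[], by simp [iterWord]⟩
  | succ n ih =>
    obtain ⟨t, ht, ht'⟩ := ih
    refine ⟨x ++ wordMap φ t, ?_, ?_⟩
    · simp only [iterWord, Function.iterate_succ_apply'] at *
      rw [ht]
      show wordMap φ ([b₀] ++ t) = _
      simp only [wordMap, List.flatMap_append] at *
      simp [hx, wordMap]
    · simp only [iterWord, Function.iterate_succ_apply'] at *
      rw [ht']
      show wordMap (liftMor φ b₀) ([none] ++ t.map some) = _
      simp only [wordMap, List.flatMap_append]
      rw [← wordMap, ← wordMap, liftMor_wordMap_some]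
      simp [liftMor, hx, wordMap]

lemma liftMor_isIterFix {B : Type} (φ : B → List B) (b₀ : B) (s : ℕ → B)
    (hfix : IsIterFix φ b₀ s) :
    IsIterFix (liftMor φ b₀) none
      (fun n => if n = 0 then (none : Option B) else some (s n)) := by
  obtain ⟨⟨x, hxne, hxφ, hxit⟩, hpre⟩ := hfix
  constructor
  · refine ⟨x.map some, by simpa using hxne, by simp [liftMor, hxφ], fun ℓ => ?_⟩
    rw [liftMor_iterWord_some]
    simpa using hxit ℓ
  · intro n i hi
    obtain ⟨t, ht, ht'⟩ := liftMor_iter φ b₀ x hxφ n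
    rw [ht'] at hi ⊢
    match i with
    | 0 => simp
    | (j+1) =>
      simp only [List.length_cons, List.length_map, Nat.add_lt_add_iff_right] at hi
      have h2 := hpre n (j+1) (by rw [ht]; simpa using hi)
      rw [ht] at h2
      simp only [List.getElem?_cons_succ, List.getElem?_map] at h2 ⊢
      rw [h2]
      simp

theorem stmt8 {A : Type} [Fintype A] (a : ℕ → A) (a' : ℕ → Option A)
    (h0 : a' 0 = none) (hn : ∀ n, 1 ≤ n → a' n = some (a n)) :
    (IsMorphic a → IsMorphic a') ∧ ∀ k, IsKAutomatic k a → IsKAutomatic k a' := by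
  have code : ∀ {B : Type} (s : ℕ → B) (c : B → A), (∀ n, a n = c (s n)) →
      ∀ n, a' n = Option.map c ((fun n => if n = 0 then (none : Option B) else some (s n)) n) := by
    intro B s c hc n
    match n with
    | 0 => simpa using h0
    | (m+1) => simp [hn (m+1) (Nat.succ_le_succ (Nat.zero_le m)), hc (m+1)]
  constructor
  · rintro ⟨B, _, φ, b₀, s, c, hfix, hc⟩
    exact ⟨Option B, inferInstance, liftMor φ b₀, none, _, Option.map c,
      liftMor_isIterFix φ b₀ s hfix, code s c hc⟩
  · rintro k ⟨B, _, φ, b₀, s, c, hunif, hfix, hc⟩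
    refine ⟨Option B, inferInstance, liftMor φ b₀, none, _, Option.map c,
      ?_, liftMor_isIterFix φ b₀ s hfix, code s c hc⟩
    intro b
    match b with
    | some b => simpa [liftMor] using hunif b
    | none =>
      obtain ⟨x, hxne, hxφ, _⟩ := hfix.1
      have hk : k = (φ b₀).length := (hunif b₀).symm
      simp [liftMor, hxφ, hk]
end

section
/- The sequence Z = 2 1 0 2 0 1 2 ⋯ of lengths of the blocks of 1's between consecutive 0's in the Thue–Morse sequence is the iterative fixed point of the morphism σ: 2 → 210, 1 → 20, 0 → 1 beginning with 2, and σ is non-uniform. -/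
/-- The Thue–Morse morphism `0 ↦ 01`, `1 ↦ 10` (with `0 := false`, `1 := true`). -/
def mu : Bool → List Bool
  | false => [false, true]
  | true => [true, false]

/-- The morphism `σ : 0 ↦ 1, 1 ↦ 20, 2 ↦ 210` on `{0,1,2}`. -/
def sigma : Fin 3 → List (Fin 3) := ![[1], [2, 0], [2, 1, 0]]

namespace Stmt16Aux

/-- The length-`n` prefix of a sequence as a list. -/
def Pre {A : Type} (s : ℕ → A) (n : ℕ) : List A := (List.range n).map s

@[simp] lemma Pre_length {A : Type} (s : ℕ → A) (n : ℕ) : (Pre s n).length = n := by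
  simp [Pre]

lemma Pre_succ {A : Type} (s : ℕ → A) (n : ℕ) : Pre s (n + 1) = Pre s n ++ [s n] := by
  simp [Pre, List.range_succ]

lemma Pre_add {A : Type} (s : ℕ → A) (a b : ℕ) :
    Pre s (a + b) = Pre s a ++ (List.range b).map (fun j => s (a + j)) := by
  simp [Pre, List.range_add, List.map_map, Function.comp]

lemma Pre_get? {A : Type} (s : ℕ → A) {n i : ℕ} (h : i < n) :
    (Pre s n)[i]? = some (s i) := by
  rw [Pre, List.getElem?_map, List.getElem?_range h]
  rfl

lemma prefixSeq_Pre {A : Type} (s : ℕ → A) (n : ℕ) : PrefixSeq (Pre s n) s := by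
  intro i hi
  exact Pre_get? s (by simpa using hi)

lemma eq_Pre_of_prefixSeq {A : Type} {w : List A} {s : ℕ → A} (h : PrefixSeq w s) :
    w = Pre s w.length := by
  apply List.ext_getElem?
  intro i
  by_cases hi : i < w.length
  · rw [h i hi, Pre_get? s hi]
  · rw [List.getElem?_eq_none (le_of_not_gt hi), List.getElem?_eq_none (by simp; omega)]

lemma Pre_take {A : Type} (s : ℕ → A) (m L : ℕ) (h : m ≤ L) :
    (Pre s L).take m = Pre s m := by
  simp [Pre, ← List.map_take, List.take_range, Nat.min_eq_left h]

lemma pre_of_append {A : Type} {s : ℕ → A} {u v : List A} {L : ℕ} (h : u ++ v = Pre s L) :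
    u = Pre s u.length := by
  have hL : u.length ≤ L := by
    have := congrArg List.length h
    simp at this
    omega
  have h2 := congrArg (List.take u.length) h
  rwa [List.take_left, Pre_take s _ _ hL] at h2

@[simp] lemma wordMap_nil {A B : Type} (φ : A → List B) : wordMap φ [] = [] := rfl

@[simp] lemma wordMap_cons {A B : Type} (φ : A → List B) (a : A) (w : List A) :
    wordMap φ (a :: w) = φ a ++ wordMap φ w := by
  simp [wordMap]

lemma wordMap_append {A B : Type} (φ : A → List B) (u v : List A) :
    wordMap φ (u ++ v) = wordMap φ u ++ wordMap φ v := by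
  simp [wordMap]

@[simp] lemma wordMap_singleton {A B : Type} (φ : A → List B) (a : A) :
    wordMap φ [a] = φ a := by
  simp [wordMap]

@[simp] lemma iterWord_zero {A : Type} (φ : A → List A) (w : List A) :
    iterWord φ 0 w = w := rfl

lemma iterWord_succ {A : Type} (φ : A → List A) (n : ℕ) (w : List A) :
    iterWord φ (n + 1) w = iterWord φ n (wordMap φ w) :=
  Function.iterate_succ_apply _ _ _

lemma iterWord_succ' {A : Type} (φ : A → List A) (n : ℕ) (w : List A) :
    iterWord φ (n + 1) w = wordMap φ (iterWord φ n w) :=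
  Function.iterate_succ_apply' _ _ _

lemma iterWord_append {A : Type} (φ : A → List A) (n : ℕ) (u v : List A) :
    iterWord φ n (u ++ v) = iterWord φ n u ++ iterWord φ n v := by
  induction n generalizing u v with
  | zero => rfl
  | succ n ih =>
    rw [iterWord_succ, iterWord_succ, iterWord_succ, wordMap_append, ih]

lemma length_iter_ge {A : Type} {φ : A → List A} {a₀ : A} (h : Prolongable φ a₀) (n : ℕ) :
    n + 1 ≤ (iterWord φ n [a₀]).length := by
  obtain ⟨x, hx, hphi, hit⟩ := h
  induction n with
  | zero => simp
  | succ n ih =>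
    have he : iterWord φ (n + 1) [a₀] = iterWord φ n [a₀] ++ iterWord φ n x := by
      rw [iterWord_succ, wordMap_singleton, hphi]
      rw [show a₀ :: x = [a₀] ++ x from rfl, iterWord_append]
    rw [he, List.length_append]
    have hpos : 0 < (iterWord φ n x).length := List.length_pos_iff.2 (hit n)
    omega

lemma seqFix {A : Type} {φ : A → List A} {a₀ : A} {s : ℕ → A} (h : IsIterFix φ a₀ s) (m : ℕ) :
    wordMap φ (Pre s m) = Pre s (wordMap φ (Pre s m)).length := by
  have hiter : iterWord φ m [a₀] = Pre s (iterWord φ m [a₀]).length :=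
    eq_Pre_of_prefixSeq (h.2 m)
  have hlen : m ≤ (iterWord φ m [a₀]).length := by
    have := length_iter_ge h.1 m; omega
  have htake : (iterWord φ m [a₀]).take m = Pre s m := by
    rw [hiter, Pre_take s _ _ hlen]
  have hsplit : Pre s m ++ (iterWord φ m [a₀]).drop m = iterWord φ m [a₀] := by
    rw [← htake, List.take_append_drop]
  have h2 : wordMap φ (Pre s m) ++ wordMap φ ((iterWord φ m [a₀]).drop m)
      = iterWord φ (m + 1) [a₀] := by
    rw [← wordMap_append, hsplit, iterWord_succ']
  have h3 : iterWord φ (m + 1) [a₀] = Pre s (iterWord φ (m + 1) [a₀]).length :=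
    eq_Pre_of_prefixSeq (h.2 (m + 1))
  rw [h3] at h2
  exact pre_of_append h2

lemma mu_eq (b : Bool) : mu b = [b, !b] := by cases b <;> rfl

lemma length_wordMap_mu (w : List Bool) : (wordMap mu w).length = 2 * w.length := by
  induction w with
  | nil => simp
  | cons a w ih =>
    rw [wordMap_cons, List.length_append, ih, mu_eq]
    simp; omega

/-- The block map `k ↦ 0 1^k`. -/
def G (k : Fin 3) : List Bool := false :: List.replicate (k : ℕ) true

@[simp] lemma G_length (k : Fin 3) : (G k).length = (k : ℕ) + 1 := by simp [G]

lemma GFact : ∀ k : Fin 3, wordMap mu (G k) = wordMap G (sigma k) := by decide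

lemma GFact_word (W : List (Fin 3)) :
    wordMap G (wordMap sigma W) = wordMap mu (wordMap G W) := by
  induction W with
  | nil => rfl
  | cons a W ih =>
    rw [wordMap_cons, wordMap_append, ih, wordMap_cons, wordMap_append, GFact]

lemma sigma_ne_nil (a : Fin 3) : sigma a ≠ [] := by fin_cases a <;> decide

lemma wordMap_sigma_ne_nil {w : List (Fin 3)} (h : w ≠ []) : wordMap sigma w ≠ [] := by
  cases w with
  | nil => exact absurd rfl h
  | cons a w =>
    rw [wordMap_cons]
    intro hc
    exact sigma_ne_nil a (List.append_eq_nil_iff.1 hc).1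

end Stmt16Aux

open Stmt16Aux in
theorem stmt16 (t : ℕ → Bool) (ht : IsIterFix mu false t)
    (zeros : ℕ → ℕ) (hmono : StrictMono zeros)
    (hz : ∀ i, t (zeros i) = false)
    (hall : ∀ n, t n = false → ∃ i, zeros i = n)
    (Z : ℕ → Fin 3)
    (hZ : ∀ i, (Z i : ℕ) = zeros (i + 1) - zeros i - 1) :
    IsIterFix sigma 2 Z ∧ ¬ ∃ m, Uniform m sigma := by
  -- `t 0 = false`
  have t0 : t 0 = false := by
    have h := ht.2 0 0 (by simp)
    simp [iterWord] at h
    exact h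
  -- the fixed-point equation for `mu`
  have mu_pre : ∀ m, wordMap mu (Pre t m) = Pre t (2 * m) := by
    intro m
    have h := seqFix ht m
    rwa [length_wordMap_mu, Pre_length] at h
  -- recurrences for `t`
  have trec : ∀ n, t (2 * n) = t n ∧ t (2 * n + 1) = ! t n := by
    intro n
    have h1 := mu_pre (n + 1)
    rw [Pre_succ, wordMap_append, wordMap_singleton, mu_pre n, mu_eq] at h1
    have h2 : Pre t (2 * (n + 1)) = Pre t (2 * n) ++ [t (2 * n), t (2 * n + 1)] := by
      rw [show 2 * (n + 1) = (2 * n + 1) + 1 by ring, Pre_succ, Pre_succ]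
      simp
    rw [h2] at h1
    have h3 := List.append_cancel_left h1
    have h4 : t n = t (2 * n) ∧ (!t n) = t (2 * n + 1) := by
      injection h3 with ha hb
      injection hb with hb _
      exact ⟨ha, hb⟩
    exact ⟨h4.1.symm, h4.2.symm⟩
  have te : ∀ n, t (2 * n) = t n := fun n => (trec n).1
  have to' : ∀ n, t (2 * n + 1) = ! t n := fun n => (trec n).2
  -- closed form for `zeros`
  set g : ℕ → ℕ := fun i => 2 * i + (if t i then 1 else 0) with hgdef
  have hg0 : ∀ i, t (g i) = false := by
    intro i
    cases h : t i with
    | true =>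
      have hgi : g i = 2 * i + 1 := by simp [hgdef, h]
      rw [hgi, to' i, h]; rfl
    | false =>
      have hgi : g i = 2 * i := by simp [hgdef, h]
      rw [hgi, te i, h]
  have hgmono : StrictMono g := by
    apply strictMono_nat_of_lt_succ
    intro i
    simp only [hgdef]
    split <;> split <;> omega
  have hgall : ∀ n, t n = false → ∃ i, g i = n := by
    intro n hn
    rcases Nat.even_or_odd n with ⟨i, hi⟩ | ⟨i, hi⟩
    · refine ⟨i, ?_⟩
      have hif : t i = false := by rw [← te i, ← show i + i = 2 * i by ring, ← hi]; exact hn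
      have hgi : g i = 2 * i := by simp [hgdef, hif]
      omega
    · refine ⟨i, ?_⟩
      have h1 : t (2 * i + 1) = false := by rw [← hi]; exact hn
      rw [to' i] at h1
      have hit' : t i = true := by simpa using h1
      have hgi : g i = 2 * i + 1 := by simp [hgdef, hit']
      omega
  have hzg : ∀ i, zeros i = g i := by
    intro i
    induction i using Nat.strong_induction_on with
    | _ i ih =>
      have h1 : zeros i ≤ g i := by
        by_contra hc
        push_neg at hc
        obtain ⟨k, hk⟩ := hall (g i) (hg0 i)
        have hki : k < i := hmono.lt_iff_lt.1 (by omega)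
        have := ih k hki
        have : g k = g i := by omega
        have := hgmono.injective this
        omega
      have h2 : g i ≤ zeros i := by
        obtain ⟨j, hj⟩ := hgall (zeros i) (hz i)
        by_cases hji : j < i
        · have := ih j hji
          have : zeros j = zeros i := by omega
          have := hmono.injective this
          omega
        · push_neg at hji
          have := hgmono.monotone hji
          omega
      omega
  have hz0 : zeros 0 = 0 := by
    rw [hzg]; simp [hgdef, t0]
  have t1 : t 1 = true := by
    have := to' 0
    rw [t0] at this
    simpa using this
  have hz1 : zeros 1 = 3 := by
    rw [hzg]; simp [hgdef, t1]
  have zsucc : ∀ m, zeros (m + 1) = zeros m + (Z m : ℕ) + 1 := by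
    intro m
    have h1 := hZ m
    have h2 : zeros m < zeros (m + 1) := hmono (by omega)
    omega
  have Z0 : Z 0 = 2 := by
    have h : (Z 0 : ℕ) = 2 := by rw [hZ 0, hz0, hz1]
    exact Fin.ext (by rw [h]; rfl)
  -- positions strictly between consecutive zeros carry `true`
  have Pones : ∀ m j, zeros m < j → j < zeros (m + 1) → t j = true := by
    intro m j h1 h2
    by_contra hc
    obtain ⟨i, hi⟩ := hall j (by simpa using hc)
    have hm1 : m < i := hmono.lt_iff_lt.1 (by omega)
    have hm2 : i < m + 1 := hmono.lt_iff_lt.1 (by omega)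
    omega
  -- images of prefixes of Z under G are prefixes of t
  have P1 : ∀ m, wordMap G (Pre Z m) = Pre t (zeros m) := by
    intro m
    induction m with
    | zero => simp [Pre, hz0]
    | succ m ih =>
      rw [Pre_succ, wordMap_append, wordMap_singleton, ih, zsucc m,
        show zeros m + (Z m : ℕ) + 1 = zeros m + ((Z m : ℕ) + 1) by ring, Pre_add]
      congr 1
      symm
      rw [List.range_succ_eq_map, List.map_cons, List.map_map]
      show t (zeros m + 0) :: _ = G (Z m)
      rw [Nat.add_zero, hz m, G]
      congr 1
      rw [List.eq_replicate_iff]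
      constructor
      · simp
      · intro b hb
        simp only [List.mem_map, List.mem_range, Function.comp] at hb
        obtain ⟨j, hj, rfl⟩ := hb
        apply Pones m
        · omega
        · rw [zsucc m]; omega
  -- conversely, G-preimages of suitable prefixes of t are prefixes of Z
  have P2 : ∀ W : List (Fin 3), ∀ n, wordMap G W = Pre t n → t n = false →
      W = Pre Z W.length ∧ n = zeros W.length := by
    intro W
    induction W using List.reverseRecOn with
    | nil =>
      intro n h hn
      have hn0 : n = 0 := by
        have hh := congrArg List.length h
        simp at hh
        omega
      subst hn0
      exact ⟨by simp [Pre], hz0.symm⟩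
    | append_singleton W' w ih =>
      intro n h hn
      rw [wordMap_append, wordMap_singleton] at h
      set L' := (wordMap G W').length with hL'
      have hlen : L' + ((w : ℕ) + 1) = n := by
        have := congrArg List.length h
        simpa using this
      have hW' : wordMap G W' = Pre t L' := pre_of_append h
      have ht' : t L' = false := by
        have hh := congrArg (fun l => l[L']?) h
        rw [List.getElem?_append_right (le_refl L'), Nat.sub_self] at hh
        rw [Pre_get? t (by omega)] at hh
        simp [G] at hh
        exact hh
      obtain ⟨hW'', hLz⟩ := ih L' hW' ht'
      set m' := W'.length with hm'
      have hones : ∀ j, j < (w : ℕ) → t (L' + 1 + j) = true := by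
        intro j hj
        have hh := congrArg (fun l => l[L' + 1 + j]?) h
        rw [List.getElem?_append_right (by omega)] at hh
        rw [Pre_get? t (by omega)] at hh
        have hidx : L' + 1 + j - L' = j + 1 := by omega
        rw [hidx] at hh
        simp only [G] at hh
        rw [List.getElem?_cons_succ] at hh
        rw [List.getElem?_replicate] at hh
        simp [hj] at hh
        exact hh
      obtain ⟨i, hi⟩ := hall n hn
      have hLzeros : L' = zeros m' := hLz
      have h1 : zeros m' < n := by omega
      have hmi : m' < i := hmono.lt_iff_lt.1 (by omega)
      have hle : zeros (m' + 1) ≤ n := by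
        have := hmono.monotone (show m' + 1 ≤ i by omega)
        omega
      have hgt : zeros m' < zeros (m' + 1) := hmono (Nat.lt_succ_self m')
      have h2 : zeros (m' + 1) = n := by
        by_contra hne
        have hlt : zeros (m' + 1) < n := lt_of_le_of_ne hle hne
        have := hones (zeros (m' + 1) - L' - 1) (by omega)
        rw [show L' + 1 + (zeros (m' + 1) - L' - 1) = zeros (m' + 1) by omega] at this
        rw [hz (m' + 1)] at this
        exact Bool.false_ne_true this
      have hZm : Z m' = w := by
        have hval : (Z m' : ℕ) = (w : ℕ) := by
          rw [hZ m']; omega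
        exact Fin.ext hval
      constructor
      · rw [List.length_append, List.length_singleton, Pre_succ, ← hm', ← hW'', hZm]
      · rw [List.length_append, List.length_singleton, ← hm']
        exact h2.symm
  -- main induction: iterates of sigma are prefixes of Z
  have key : ∀ n, ∃ m, iterWord sigma n [2] = Pre Z m := by
    intro n
    induction n with
    | zero =>
      refine ⟨1, ?_⟩
      rw [show (1 : ℕ) = 0 + 1 from rfl, Pre_succ, Z0]
      simp [Pre]
    | succ n ih =>
      obtain ⟨m, hm⟩ := ih
      rw [iterWord_succ', hm]
      have hGm : wordMap G (wordMap sigma (Pre Z m)) = Pre t (2 * zeros m) := by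
        rw [GFact_word, P1 m, mu_pre (zeros m)]
      have ht2 : t (2 * zeros m) = false := by rw [te (zeros m)]; exact hz m
      obtain ⟨h1, _⟩ := P2 _ _ hGm ht2
      exact ⟨_, h1⟩
  constructor
  · constructor
    · -- Prolongable
      refine ⟨[1, 0], by simp, by decide, ?_⟩
      intro ℓ
      induction ℓ with
      | zero => simp
      | succ ℓ ih =>
        rw [iterWord_succ']
        exact wordMap_sigma_ne_nil ih
    · intro n
      obtain ⟨m, hm⟩ := key n
      rw [hm]
      exact prefixSeq_Pre Z m
  · rintro ⟨m, hU⟩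
    have h0 := hU 0
    have h2 := hU 2
    simp [sigma] at h0 h2
    omega
end
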